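/- Let r and N be positive integers with N ≥ 2^r, let m be a positive integer, and let m₁, …, m_r be integers. Then there exist a positive integer n ≤ N and integers a₁, …, a_r such that |a_i − n·m_i/m| ≤ 1/⌊N^{1/r}⌋ for every i = 1, …, r. -/

import Mathlib

lemma aux_close {Q : ℕ} (hQ0 : 0 < Q) {u v : ℝ}
    (hfe : ⌊(Q:ℝ) * Int.fract u⌋₊ = ⌊(Q:ℝ) * Int.fract v⌋₊) :
    |Int.fract u - Int.fract v| ≤ 1 / Q := by
  have hQR : (0:ℝ) < Q := by exact_mod_cast hQ0
  have h1 : (0:ℝ) ≤ (Q:ℝ) * Int.fract u := mul_nonneg hQR.le (Int.fract_nonneg u)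
  have h2 : (0:ℝ) ≤ (Q:ℝ) * Int.fract v := mul_nonneg hQR.le (Int.fract_nonneg v)
  have hd : |(Q:ℝ) * Int.fract u - (Q:ℝ) * Int.fract v| < 1 := by
    rw [abs_sub_lt_iff]
    constructor
    · calc (Q:ℝ) * Int.fract u - (Q:ℝ) * Int.fract v
          < (⌊(Q:ℝ) * Int.fract u⌋₊ + 1) - (Q:ℝ) * Int.fract v := by
            have := Nat.lt_floor_add_one ((Q:ℝ) * Int.fract u); linarith
        _ ≤ 1 := by
            have := Nat.floor_le h2
            rw [hfe]; linarith
    · calc (Q:ℝ) * Int.fract v - (Q:ℝ) * Int.fract u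
          < (⌊(Q:ℝ) * Int.fract v⌋₊ + 1) - (Q:ℝ) * Int.fract u := by
            have := Nat.lt_floor_add_one ((Q:ℝ) * Int.fract v); linarith
        _ ≤ 1 := by
            have := Nat.floor_le h1
            rw [← hfe]; linarith
  have : Int.fract u - Int.fract v = ((Q:ℝ) * Int.fract u - (Q:ℝ) * Int.fract v) / Q := by
    field_simp
  rw [this, abs_div, abs_of_pos hQR]
  gcongr

/-- Dirichlet's simultaneous diophantine approximation for the rationals `mᵢ/m`:
for `N ≥ 2^r` there is a common multiplier `n ≤ N` and integers `aᵢ` with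
`|aᵢ - n·mᵢ/m| ≤ 1/⌊N^(1/r)⌋`. -/
theorem stmt4 (r N m : ℕ) (hr : 0 < r) (hN : 2 ^ r ≤ N) (hm : 0 < m)
    (mi : Fin r → ℤ) :
    ∃ n : ℕ, 0 < n ∧ n ≤ N ∧ ∃ a : Fin r → ℤ,
      ∀ i : Fin r, |(a i : ℝ) - (n : ℝ) * (mi i : ℝ) / (m : ℝ)| ≤
        1 / (⌊(N : ℝ) ^ ((1 : ℝ) / (r : ℝ))⌋₊ : ℝ) := by
  set x : Fin r → ℝ := fun i => (mi i : ℝ) / m with hxdef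
  set Q : ℕ := ⌊(N : ℝ) ^ ((1 : ℝ) / (r : ℝ))⌋₊ with hQdef
  have hrR : (0:ℝ) < (r:ℝ) := by exact_mod_cast hr
  have hNR : (0:ℝ) ≤ (N:ℝ) := Nat.cast_nonneg N
  have h2 : (2:ℝ) ≤ (N:ℝ) ^ ((1:ℝ)/(r:ℝ)) := by
    have key : ((2:ℝ)^(r:ℕ)) ^ ((1:ℝ)/(r:ℝ)) = 2 := by
      rw [← Real.rpow_natCast 2 r, ← Real.rpow_mul (by norm_num),
        mul_one_div, div_self hrR.ne', Real.rpow_one]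
    calc (2:ℝ) = ((2:ℝ)^(r:ℕ)) ^ ((1:ℝ)/(r:ℝ)) := key.symm
      _ ≤ (N:ℝ) ^ ((1:ℝ)/(r:ℝ)) := by
          apply Real.rpow_le_rpow (by positivity) _ (by positivity)
          exact_mod_cast hN
  have hQ2 : 2 ≤ Q := Nat.le_floor (by exact_mod_cast h2)
  have hQ0 : 0 < Q := by omega
  have hQN : Q ^ r ≤ N := by
    have h1 : (Q:ℝ) ≤ (N:ℝ)^((1:ℝ)/(r:ℝ)) := Nat.floor_le (by positivity)
    have h3 : ((Q:ℝ))^(r:ℕ) ≤ ((N:ℝ)^((1:ℝ)/(r:ℝ)))^(r:ℕ) :=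
      pow_le_pow_left₀ (Nat.cast_nonneg Q) h1 r
    rw [← Real.rpow_natCast ((N:ℝ)^((1:ℝ)/(r:ℝ))) r, ← Real.rpow_mul hNR,
      one_div_mul_cancel hrR.ne', Real.rpow_one] at h3
    exact_mod_cast h3
  -- pigeonhole
  have hQR : (0:ℝ) < (Q:ℝ) := by exact_mod_cast hQ0
  let f : Fin (Q^r+1) → Fin r → Fin Q := fun n i =>
    ⟨⌊(Q:ℝ) * Int.fract ((n:ℝ) * x i)⌋₊, by
      apply Nat.floor_lt (mul_nonneg hQR.le (Int.fract_nonneg _)) |>.mpr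
      have := Int.fract_lt_one ((n:ℝ) * x i)
      nlinarith [Int.fract_nonneg ((n:ℝ) * x i)]⟩
  have hcard : Fintype.card (Fin r → Fin Q) < Fintype.card (Fin (Q^r+1)) := by
    simp
  obtain ⟨n1, n2, hne, hfe⟩ := Fintype.exists_ne_map_eq_of_card_lt f hcard
  have key : ∀ (p q : Fin (Q^r+1)), (p:ℕ) < (q:ℕ) → f p = f q →
      ∃ n : ℕ, 0 < n ∧ n ≤ N ∧ ∃ a : Fin r → ℤ,
      ∀ i : Fin r, |(a i : ℝ) - (n : ℝ) * (mi i : ℝ) / (m : ℝ)| ≤ 1 / (Q : ℝ) := by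
    intro p q hpq hfeq
    refine ⟨(q:ℕ) - (p:ℕ), by omega, ?_, ?_⟩
    · have : (q:ℕ) ≤ Q^r := by omega
      omega
    · refine ⟨fun i => ⌊(q:ℝ) * x i⌋ - ⌊(p:ℝ) * x i⌋, fun i => ?_⟩
      have hfl : ⌊(Q:ℝ) * Int.fract ((q:ℝ) * x i)⌋₊ = ⌊(Q:ℝ) * Int.fract ((p:ℝ) * x i)⌋₊ := by
        have := congrFun hfeq i
        simpa [f, Fin.ext_iff] using this.symm
      have hclose := aux_close hQ0 hfl
      have hcast : (((q:ℕ) - (p:ℕ) : ℕ) : ℝ) = (q:ℝ) - (p:ℝ) := by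
        push_cast [Nat.cast_sub hpq.le]
        ring
      have hx : ((q:ℕ) - (p:ℕ) : ℕ) * (mi i : ℝ) / (m : ℝ)
          = (q:ℝ) * x i - (p:ℝ) * x i := by
        rw [hcast, hxdef]
        field_simp
      rw [hx]
      have : ((⌊(q:ℝ) * x i⌋ - ⌊(p:ℝ) * x i⌋ : ℤ) : ℝ) - ((q:ℝ) * x i - (p:ℝ) * x i)
          = -(Int.fract ((q:ℝ) * x i) - Int.fract ((p:ℝ) * x i)) := by
        unfold Int.fract
        push_cast
        ring
      rw [this, abs_neg]
      exact hclose
  rcases Fin.val_ne_of_ne hne |>.lt_or_gt with h | h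
  · exact key n1 n2 h hfe
  · exact key n2 n1 h hfe.symm
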